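/- Let α ∈ (0,1). Then: (i) |r₊| = |r₋| = |r₁| = R₀; (ii) |r₊ − α/c| = |r₋ − α/c| = |r₃ − α/c| = R_α; (iii) |r₊ − 1/c| = |r₋ − 1/c| = |r₂ − 1/c| = R₁. In other words, r₊, r₋ and r₁ lie on the circle of radius R₀ centered at 0; r₊, r₋ and r₃ lie on the circle of radius R_α centered at α/c; and r₊, r₋ and r₂ lie on the circle of radius R₁ centered at 1/c. -/

import Mathlib

open Complex

noncomputable def cc (α : ℝ) : ℝ := Real.sqrt (α / (1 - α + α ^ 2))
noncomputable def r1 (α : ℝ) : ℝ := -Real.sqrt α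
noncomputable def r2 (α : ℝ) : ℝ := Real.sqrt α * (α * cc α + Real.sqrt α) / (cc α + Real.sqrt α)
noncomputable def r3 (α : ℝ) : ℝ := Real.sqrt α * (cc α + Real.sqrt α) / (α * cc α + Real.sqrt α)
noncomputable def rp (α : ℝ) : ℂ :=
  (cc α : ℂ) * ((1 + (α : ℂ)) / 2 + Complex.I * (Real.sqrt 3 : ℂ) * ((1 - (α : ℂ)) / 2))
noncomputable def rm (α : ℝ) : ℂ :=
  (cc α : ℂ) * ((1 + (α : ℂ)) / 2 - Complex.I * (Real.sqrt 3 : ℂ) * ((1 - (α : ℂ)) / 2))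
noncomputable def R0 (α : ℝ) : ℝ := Real.sqrt α
noncomputable def Ra (α : ℝ) : ℝ := (1 - α) * Real.sqrt α
noncomputable def R1 (α : ℝ) : ℝ := (1 - α) / Real.sqrt α

lemma abs_mk_eq (x y R : ℝ) (hR : 0 ≤ R) (h : x ^ 2 + y ^ 2 = R ^ 2) :
    ‖((x : ℂ) + (y : ℂ) * Complex.I)‖ = R := by
  rw [Complex.norm_def, Complex.normSq_add_mul_I, h, Real.sqrt_sq hR]

/-- `r₊, r₋, r₁` lie on the circle `|ζ| = R₀`; `r₊, r₋, r₃` lie on `|ζ - α/c| = R_α`;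
`r₊, r₋, r₂` lie on `|ζ - 1/c| = R₁`. -/
theorem zeros_on_three_circles (α : ℝ) (hα0 : 0 < α) (hα1 : α < 1) :
    ‖rp α‖ = R0 α ∧ ‖rm α‖ = R0 α ∧
    ‖(r1 α : ℂ)‖ = R0 α ∧
    ‖rp α - (α : ℂ) / (cc α : ℂ)‖ = Ra α ∧
    ‖rm α - (α : ℂ) / (cc α : ℂ)‖ = Ra α ∧
    ‖(r3 α : ℂ) - (α : ℂ) / (cc α : ℂ)‖ = Ra α ∧
    ‖rp α - 1 / (cc α : ℂ)‖ = R1 α ∧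
    ‖rm α - 1 / (cc α : ℂ)‖ = R1 α ∧
    ‖(r2 α : ℂ) - 1 / (cc α : ℂ)‖ = R1 α := by
  set s := Real.sqrt α with hsdef
  set c := cc α with hcdef
  have hs0 : 0 < s := Real.sqrt_pos.mpr hα0
  have hs2 : s ^ 2 = α := Real.sq_sqrt hα0.le
  have hD : 0 < 1 - α + α ^ 2 := by nlinarith
  have hc0 : 0 < c := Real.sqrt_pos.mpr (by positivity)
  have hc2 : c ^ 2 * (1 - α + α ^ 2) = α := by
    have : c ^ 2 = α / (1 - α + α ^ 2) := Real.sq_sqrt (by positivity)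
    rw [this]; field_simp
  have h3 : (Real.sqrt 3) ^ 2 = 3 := Real.sq_sqrt (by norm_num)
  have h30 : 0 ≤ Real.sqrt 3 := Real.sqrt_nonneg 3
  have hcs : 0 < α * c + s := by positivity
  have hcs' : 0 < c + s := by positivity
  have hR0 : 0 ≤ R0 α := Real.sqrt_nonneg α
  have hRa : 0 ≤ Ra α := by have := Real.sqrt_nonneg α; unfold Ra; nlinarith
  have hR1 : 0 ≤ R1 α := div_nonneg (by linarith) hs0.le
  have hrp : rp α = ((c * ((1 + α) / 2) : ℝ) : ℂ) + ((c * (Real.sqrt 3 * ((1 - α) / 2)) : ℝ) : ℂ) * Complex.I := by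
    unfold rp; rw [← hcdef]; push_cast; ring
  have hrm : rm α = ((c * ((1 + α) / 2) : ℝ) : ℂ) + ((-(c * (Real.sqrt 3 * ((1 - α) / 2))) : ℝ) : ℂ) * Complex.I := by
    unfold rm; rw [← hcdef]; push_cast; ring
  have key0 : (c * ((1 + α) / 2)) ^ 2 + (c * (Real.sqrt 3 * ((1 - α) / 2))) ^ 2 = (R0 α) ^ 2 := by
    have : (R0 α) ^ 2 = α := hs2
    rw [this]; linear_combination (c^2*(1-α)^2/4) * h3 + hc2
  have keya : (c * ((1 + α) / 2) - α / c) ^ 2 + (c * (Real.sqrt 3 * ((1 - α) / 2))) ^ 2 = (Ra α) ^ 2 := by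
    have hRa2 : (Ra α) ^ 2 = (1 - α) ^ 2 * α := by unfold Ra; rw [mul_pow, hs2]
    rw [hRa2]
    field_simp
    linear_combination (c^4*(1-α)^2) * h3 + (4*c^2 - 4*α) * hc2
  have key1 : (c * ((1 + α) / 2) - 1 / c) ^ 2 + (c * (Real.sqrt 3 * ((1 - α) / 2))) ^ 2 = (R1 α) ^ 2 := by
    have hR12 : (R1 α) ^ 2 = (1 - α) ^ 2 / α := by
      unfold R1; rw [div_pow, hs2]
    rw [hR12]
    field_simp
    linear_combination (α*c^4*(1-α)^2) * h3 + (4*c^2*α - 4) * hc2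
  refine ⟨?_, ?_, ?_, ?_, ?_, ?_, ?_, ?_, ?_⟩
  · rw [hrp]; exact abs_mk_eq _ _ _ hR0 key0
  · rw [hrm]; exact abs_mk_eq _ _ _ hR0 (by linear_combination key0)
  · rw [Complex.norm_real, Real.norm_eq_abs]; unfold r1 R0; rw [abs_neg, _root_.abs_of_nonneg hs0.le]
  · have : rp α - (α : ℂ) / (c : ℂ) =
        ((c * ((1 + α) / 2) - α / c : ℝ) : ℂ) + ((c * (Real.sqrt 3 * ((1 - α) / 2)) : ℝ) : ℂ) * Complex.I := by
      rw [hrp]; push_cast; ring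
    rw [this]; exact abs_mk_eq _ _ _ hRa keya
  · have : rm α - (α : ℂ) / (c : ℂ) =
        ((c * ((1 + α) / 2) - α / c : ℝ) : ℂ) + ((-(c * (Real.sqrt 3 * ((1 - α) / 2))) : ℝ) : ℂ) * Complex.I := by
      rw [hrm]; push_cast; ring
    rw [this]; exact abs_mk_eq _ _ _ hRa (by linear_combination keya)
  · have h1 : ((r3 α : ℂ)) - (α : ℂ) / (c : ℂ) = ((r3 α - α / c : ℝ) : ℂ) := by push_cast; ring
    rw [h1, Complex.norm_real, Real.norm_eq_abs]
    have h2 : r3 α - α / c = Ra α := by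
      unfold r3 Ra
      rw [← hcdef, ← hsdef]
      field_simp
      linear_combination s*hc2 + α*c*hs2
    rw [h2, _root_.abs_of_nonneg hRa]
  · have : rp α - 1 / (c : ℂ) =
        ((c * ((1 + α) / 2) - 1 / c : ℝ) : ℂ) + ((c * (Real.sqrt 3 * ((1 - α) / 2)) : ℝ) : ℂ) * Complex.I := by
      rw [hrp]; push_cast; ring
    rw [this]; exact abs_mk_eq _ _ _ hR1 key1
  · have : rm α - 1 / (c : ℂ) =
        ((c * ((1 + α) / 2) - 1 / c : ℝ) : ℂ) + ((-(c * (Real.sqrt 3 * ((1 - α) / 2))) : ℝ) : ℂ) * Complex.I := by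
      rw [hrm]; push_cast; ring
    rw [this]; exact abs_mk_eq _ _ _ hR1 (by linear_combination key1)
  · have h1 : ((r2 α : ℂ)) - 1 / (c : ℂ) = ((r2 α - 1 / c : ℝ) : ℂ) := by push_cast; ring
    rw [h1, Complex.norm_real, Real.norm_eq_abs]
    have h2 : r2 α - 1 / c = -(R1 α) := by
      unfold r2 R1
      rw [← hcdef, ← hsdef]
      field_simp
      linear_combination hc2 + (α*c^2 + s*c - 1)*hs2
    rw [h2, abs_neg, _root_.abs_of_nonneg hR1]
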